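/- Let a, a′ > 0, a″ ≥ 0, β > 0. Let f be an exponentially distributed random variable with rate β and let g be a random variable independent of f taking values in the positive integers. Define c = a·f + a′·g + a″. Then for every real x ≥ a′ + a″: P(c ≤ x) = Σ_{k=1}^{⌊(x−a″)/a′⌋} (1 − e^(−β(x−a″−a′k)/a)) · P(g = k). -/

import Mathlib

open MeasureTheory ProbabilityTheory Real
open scoped ENNReal

/-- CDF of the energy cost `c = a·f + a′·g + a″` (proof of Proposition 3): if `f`
is exponential with rate `β` and `g` is an independent positive-integer-valued
random variable, then for `x ≥ a′ + a″`,
`P(c ≤ x) = ∑_{k=1}^{⌊(x-a″)/a′⌋} (1 - e^{-β(x-a″-a′k)/a})·P(g = k)`. -/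
theorem cost_cdf {Ω : Type*} [MeasurableSpace Ω]
    (μ : Measure Ω) [IsProbabilityMeasure μ]
    (a a' a'' β : ℝ) (ha : 0 < a) (ha' : 0 < a') (ha'' : 0 ≤ a'') (hβ : 0 < β)
    (f : Ω → ℝ) (g : Ω → ℕ)
    (hfmeas : Measurable f) (hgmeas : Measurable g)
    (hfexp : Measure.map f μ = volume.withDensity (exponentialPDF β))
    (hgpos : ∀ ω, 1 ≤ g ω)
    (hindep : IndepFun f g μ)
    (x : ℝ) (hx : a' + a'' ≤ x) :
    μ {ω | a * f ω + a' * (g ω : ℝ) + a'' ≤ x} =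
      ∑ k ∈ Finset.Icc 1 ⌊(x - a'') / a'⌋₊,
        ENNReal.ofReal (1 - Real.exp (-β * (x - a'' - a' * k) / a)) * μ {ω | g ω = k} := by
  set t : ℕ → ℝ := fun k => (x - a'' - a' * k) / a with ht
  -- CDF of f
  have hcdf : ∀ s : ℝ, μ (f ⁻¹' Set.Iic s)
      = ENNReal.ofReal (if 0 ≤ s then 1 - Real.exp (-(β * s)) else 0) := by
    intro s
    have : μ (f ⁻¹' Set.Iic s) = Measure.map f μ (Set.Iic s) := by
      rw [Measure.map_apply hfmeas measurableSet_Iic]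
    rw [this, hfexp, withDensity_apply _ measurableSet_Iic,
      lintegral_exponentialPDF_eq_antiDeriv hβ s]
  -- decomposition of the event
  have hdecomp : {ω | a * f ω + a' * (g ω : ℝ) + a'' ≤ x}
      = ⋃ k : ℕ, ({ω | f ω ≤ t k} ∩ {ω | g ω = k}) := by
    ext ω
    simp only [Set.mem_setOf_eq, Set.mem_iUnion, Set.mem_inter_iff]
    constructor
    · intro h
      refine ⟨g ω, ?_, rfl⟩
      rw [ht, le_div_iff₀ ha]
      linarith
    · rintro ⟨k, hf, hg⟩
      rw [hg] at *
      rw [ht, le_div_iff₀ ha] at hf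
      linarith
  have hSmeas : ∀ k : ℕ, MeasurableSet ({ω | f ω ≤ t k} ∩ {ω | g ω = k}) :=
    fun k => (hfmeas measurableSet_Iic).inter (hgmeas (measurableSet_singleton k))
  have hdisj : Pairwise (Function.onFun Disjoint
      fun k : ℕ => ({ω | f ω ≤ t k} ∩ {ω | g ω = k})) := by
    intro i j hij
    refine Set.disjoint_left.2 ?_
    rintro ω ⟨_, hi⟩ ⟨_, hj⟩
    exact hij (hi.symm.trans hj)
  have hterm : ∀ k : ℕ, μ ({ω | f ω ≤ t k} ∩ {ω | g ω = k})
      = ENNReal.ofReal (if 0 ≤ t k then 1 - Real.exp (-(β * t k)) else 0) * μ {ω | g ω = k} := by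
    intro k
    have := hindep.measure_inter_preimage_eq_mul (Set.Iic (t k)) {k}
      measurableSet_Iic (measurableSet_singleton k)
    have heq : f ⁻¹' Set.Iic (t k) ∩ g ⁻¹' {k} = {ω | f ω ≤ t k} ∩ {ω | g ω = k} := rfl
    rw [heq] at this
    rw [this, hcdf]
    rfl
  rw [hdecomp, measure_iUnion hdisj hSmeas]
  set N := ⌊(x - a'') / a'⌋₊ with hN
  rw [tsum_eq_sum (s := Finset.Icc 1 N) (f := fun k => μ ({ω | f ω ≤ t k} ∩ {ω | g ω = k}))]
  · refine Finset.sum_congr rfl fun k hk => ?_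
    simp only [Finset.mem_Icc] at hk
    have hk1 : (1 : ℝ) ≤ k := by exact_mod_cast hk.1
    have hkN : (k : ℝ) ≤ (x - a'') / a' :=
      le_trans (by exact_mod_cast hk.2) (Nat.floor_le (div_nonneg (by linarith) ha'.le))
    have hkN' : a' * k ≤ x - a'' := by
      rw [le_div_iff₀ ha'] at hkN; linarith
    have htk : 0 ≤ t k := by
      rw [ht]; apply div_nonneg _ ha.le; linarith
    rw [hterm k, if_pos htk]
    congr 2
    rw [ht]
    ring
  · intro k hk
    simp only [Finset.mem_Icc, not_and_or, not_le] at hk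
    rcases hk with hk | hk
    · have hk0 : k = 0 := Nat.lt_one_iff.mp hk
      subst hk0
      have : {ω | g ω = 0} = ∅ := by
        ext ω; simp only [Set.mem_setOf_eq, Set.mem_empty_iff_false, iff_false]
        exact fun h => absurd (h ▸ hgpos ω) (by norm_num)
      rw [hterm, this, measure_empty, mul_zero]
    · have htneg : t k < 0 := by
        have : (x - a'') / a' < k := by
          calc (x - a'') / a' < N + 1 := Nat.lt_floor_add_one _
          _ ≤ k := by exact_mod_cast hk
        rw [div_lt_iff₀ ha'] at this
        rw [ht]; apply div_neg_of_neg_of_pos _ ha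
        nlinarith
      rw [hterm, if_neg (not_le.2 htneg), ENNReal.ofReal_zero, zero_mul]
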